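/- If w is a cyclically reduced word containing no occurrence of a_i^{±1} and w' is a cyclic conjugate of w, then |w|_i^simple − 1 ≤ |w'|_i^simple ≤ |w|_i^simple + 1. -/

import Mathlib

namespace ESPaper

/-- A letter of the free group `F_n` over the standard basis: a generator index and a sign
    (`true` = the generator, `false` = its inverse). -/
abbrev Ltr (n : ℕ) := Fin n × Bool

/-- A word over the standard basis and its inverses. -/
abbrev Wrd (n : ℕ) := List (Ltr n)

/-- The inverse of a letter. -/
def linv {n : ℕ} (c : Ltr n) : Ltr n := (c.1, !c.2)

/-- The (formal) inverse of a word. -/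
def winv {n : ℕ} (w : Wrd n) : Wrd n := w.reverse.map linv

/-- `w` is freely reduced: no two consecutive letters are inverse to each other. -/
def Reduced {n : ℕ} (w : Wrd n) : Prop := List.Chain' (fun a b => b ≠ linv a) w

/-- `w` is cyclically reduced. -/
def CyclicallyReduced {n : ℕ} (w : Wrd n) : Prop := Reduced (w ++ w)

/-- `w` contains no occurrence of `a_i^{±1}`. -/
def Avoids {n : ℕ} (i : Fin n) (w : Wrd n) : Prop := ∀ c ∈ w, c.1 ≠ i

/-- `w` is a positive word (no inverse letters). -/
def Positive {n : ℕ} (w : Wrd n) : Prop := ∀ c ∈ w, c.2 = true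

/-- Vertices of the Whitehead graph over `a ∖ {a_i}`: all letters whose index is not `i`. -/
def WVert (n : ℕ) (i : Fin n) := {c : Ltr n // c.1 ≠ i}

/-- The Whitehead graph `Γ_{a∖{a_i}}(w)`: for each pair of consecutive letters `bc` of `w`,
    an edge from `b` to `c⁻¹`. -/
def WGraph {n : ℕ} (i : Fin n) (w : Wrd n) : SimpleGraph (WVert n i) where
  Adj x y := x ≠ y ∧ ∃ p ∈ w.zip w.tail,
    (x.1 = p.1 ∧ y.1 = linv p.2) ∨ (y.1 = p.1 ∧ x.1 = linv p.2)
  symm := ⟨by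
    rintro x y ⟨hne, p, hp, h⟩
    exact ⟨hne.symm, p, hp, h.symm⟩⟩
  loopless := ⟨fun x h => h.1 rfl⟩

/-- A graph has a cut vertex `v` if it is the union of two subgraphs, each with a vertex
    other than `v`, which intersect exactly in `v`.  (A disconnected graph on at least three
    vertices automatically has a cut vertex in this sense.) -/
def HasCutVertex {V : Type*} (G : SimpleGraph V) : Prop :=
  ∃ (v : V) (H₁ H₂ : G.Subgraph),
    H₁ ⊔ H₂ = ⊤ ∧ H₁.verts ∩ H₂.verts = {v} ∧ H₁.verts ≠ {v} ∧ H₂.verts ≠ {v}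

/-- The simple `i`-length of a word `w` (containing no `a_i^{±1}`): the greatest `t` such
    that `w = w_1 ⋯ w_t` where no Whitehead graph `Γ_{a∖{a_i}}(w_j)` has a cut vertex
    (`0` if there is no such decomposition, in particular if `Γ_{a∖{a_i}}(w)` has a cut
    vertex). -/
noncomputable def simpleLen {n : ℕ} (i : Fin n) (w : Wrd n) : ℕ :=
  sSup {t | ∃ ps : List (Wrd n), ps.length = t ∧ ps.flatten = w ∧
      ∀ p ∈ ps, p ≠ [] ∧ ¬ HasCutVertex (WGraph i p)}

/-- The conjugate reduced `i`-length of `w`: the minimum over all decompositions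
    `w =_r v_1^{u_1} ⋯ v_l^{u_l}` (equality in the free group, `v^u = u⁻¹ v u`) of
    `(l - 1) + Σ_j |v_j|_i^simple`. -/
noncomputable def crLen {n : ℕ} (i : Fin n) (w : Wrd n) : ℕ :=
  sInf {k | ∃ vs us : List (Wrd n), vs ≠ [] ∧ us.length = vs.length ∧
      (∀ v ∈ vs, Reduced v ∧ Avoids i v) ∧
      FreeGroup.mk w =
        ((vs.zip us).map fun p => (FreeGroup.mk p.2)⁻¹ * FreeGroup.mk p.1 * FreeGroup.mk p.2).prod ∧
      k = (vs.length - 1) + (vs.map (simpleLen i)).sum}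

/-- One step of cyclic reduction: cancel the first against the last letter if possible. -/
def stripOnce {n : ℕ} : Wrd n → Wrd n
  | [] => []
  | a :: rest => if rest.getLast? = some (linv a) then rest.dropLast else a :: rest

/-- Cyclic reduction of a (reduced) word. -/
def cyclicReduce {n : ℕ} (w : Wrd n) : Wrd n := stripOnce^[w.length] w

/-- `u` cyclically precedes position `p` in the cyclic word `v`. -/
def CycPrec {n : ℕ} (v : Wrd n) (p : ℕ) (u : Wrd n) : Prop :=
  u <:+ (v ++ v).take (v.length + p)

/-- `u` cyclically follows position `p` in the cyclic word `v`. -/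
def CycFoll {n : ℕ} (v : Wrd n) (p : ℕ) (u : Wrd n) : Prop :=
  u <+: (v ++ v).drop (p + 1)

/-- `u` cyclically precedes every occurrence of `a_i` (and `u⁻¹` cyclically follows every
    occurrence of `a_i⁻¹`) in the cyclic reductions of the words of `Y`. -/
def IsPrecWord {n : ℕ} (i : Fin n) (Y : List (Wrd n)) (u : Wrd n) : Prop :=
  Avoids i u ∧ ∀ y ∈ Y, ∀ p < (cyclicReduce y).length,
    ((cyclicReduce y)[p]? = some (i, true) → CycPrec (cyclicReduce y) p u) ∧
    ((cyclicReduce y)[p]? = some (i, false) → CycFoll (cyclicReduce y) p (winv u))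

open scoped Classical in
/-- The word `w_L(Y)`: a longest word cyclically preceding every occurrence of `a_i`
    in the cyclic reductions of the words of `Y` (trivial if there is no longest one). -/
noncomputable def wL {n : ℕ} (i : Fin n) (Y : List (Wrd n)) : Wrd n :=
  if h : ∃ u, IsPrecWord i Y u ∧ ∀ u', IsPrecWord i Y u' → u'.length ≤ u.length
  then h.choose else []

/-- The set of cyclic positions of `v` occupied by the occurrences of a preceding word of
    length `len` around the occurrences of `a_i^{±1}`. -/
def LOcc {n : ℕ} (i : Fin n) (len : ℕ) (v : Wrd n) : Set ℕ :=
  {t | ∃ p k, p < v.length ∧ k < len ∧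
    ((v[p]? = some (i, true) ∧ t = (p + v.length - 1 - k) % v.length) ∨
     (v[p]? = some (i, false) ∧ t = (p + 1 + k) % v.length))}

/-- The set of cyclic positions of `v` occupied by the occurrences of a following word of
    length `len` around the occurrences of `a_i^{±1}`. -/
def ROcc {n : ℕ} (i : Fin n) (len : ℕ) (v : Wrd n) : Set ℕ :=
  {t | ∃ p k, p < v.length ∧ k < len ∧
    ((v[p]? = some (i, true) ∧ t = (p + 1 + k) % v.length) ∨
     (v[p]? = some (i, false) ∧ t = (p + v.length - 1 - k) % v.length))}

/-- `u` cyclically follows every occurrence of `a_i` (and `u⁻¹` precedes every `a_i⁻¹`)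
    in the cyclic reductions of the words of `Y`, with no occurrence of `u` intersecting an
    occurrence of `w_L(Y)`. -/
def IsFolWord {n : ℕ} (i : Fin n) (Y : List (Wrd n)) (u : Wrd n) : Prop :=
  Avoids i u ∧ (∀ y ∈ Y, ∀ p < (cyclicReduce y).length,
    ((cyclicReduce y)[p]? = some (i, true) → CycFoll (cyclicReduce y) p u) ∧
    ((cyclicReduce y)[p]? = some (i, false) → CycPrec (cyclicReduce y) p (winv u))) ∧
  ∀ y ∈ Y, Disjoint (LOcc i (wL i Y).length (cyclicReduce y)) (ROcc i u.length (cyclicReduce y))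

open scoped Classical in
/-- The word `w_R(Y)`. -/
noncomputable def wR {n : ℕ} (i : Fin n) (Y : List (Wrd n)) : Wrd n :=
  if h : ∃ u, IsFolWord i Y u ∧ ∀ u', IsFolWord i Y u' → u'.length ≤ u.length
  then h.choose else []

/-- The auxiliary automorphism `α'` sending `a_i` to `w_L⁻¹ a_i w_R⁻¹`. -/
noncomputable def alphaP {n : ℕ} (i : Fin n) (Y : List (Wrd n)) :
    FreeGroup (Fin n) →* FreeGroup (Fin n) :=
  FreeGroup.lift fun j => if j = i then
    (FreeGroup.mk (wL i Y))⁻¹ * FreeGroup.of i * (FreeGroup.mk (wR i Y))⁻¹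
  else FreeGroup.of j

/-- The cyclic reduction of `α'(y)` written as a reduced word. -/
noncomputable def apWord {n : ℕ} (i : Fin n) (Y : List (Wrd n)) (y : Wrd n) : Wrd n :=
  cyclicReduce (FreeGroup.toWord (alphaP i Y (FreeGroup.mk y)))

/-- In `α' Y`, every maximal power of `a_i` either occurs by itself as an element, or is
    cyclically conjugated by `u`. -/
def IsConjWord {n : ℕ} (i : Fin n) (Y : List (Wrd n)) (u : Wrd n) : Prop :=
  Avoids i u ∧ ∀ y ∈ Y,
    (∀ c ∈ apWord i Y y, c.1 = i) ∨
    ∀ p < (apWord i Y y).length,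
      (apWord i Y y)[p]?.map Prod.fst = some i →
        (((apWord i Y y)[(p + (apWord i Y y).length - 1) % (apWord i Y y).length]?.map
            Prod.fst ≠ some i → CycPrec (apWord i Y y) p (winv u)) ∧
         ((apWord i Y y)[(p + 1) % (apWord i Y y).length]?.map Prod.fst ≠ some i →
            CycFoll (apWord i Y y) p u))

open scoped Classical in
/-- The word `w_C(Y)` (trivial when every maximal power of `a_i` occurs by itself,
    since then there is no longest conjugating word). -/
noncomputable def wC {n : ℕ} (i : Fin n) (Y : List (Wrd n)) : Wrd n :=
  if h : ∃ u, IsConjWord i Y u ∧ ∀ u', IsConjWord i Y u' → u'.length ≤ u.length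
  then h.choose else []

/-- The automorphism `α_Y` sending `a_i` to `w_L⁻¹ w_C a_i w_C⁻¹ w_R⁻¹`. -/
noncomputable def alphaFG {n : ℕ} (i : Fin n) (Y : List (Wrd n)) :
    FreeGroup (Fin n) →* FreeGroup (Fin n) :=
  FreeGroup.lift fun j => if j = i then
    (FreeGroup.mk (wL i Y))⁻¹ * FreeGroup.mk (wC i Y) * FreeGroup.of i *
      (FreeGroup.mk (wC i Y))⁻¹ * (FreeGroup.mk (wR i Y))⁻¹
  else FreeGroup.of j

/-- `u` is an `i`-chunk of `g`: a maximal cyclic subword of the cyclic reduction of `g`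
    containing no `a_i^{±1}`. -/
def IsIChunk {n : ℕ} (i : Fin n) (g : FreeGroup (Fin n)) (u : Wrd n) : Prop :=
  Avoids i u ∧
    ((∃ p < (cyclicReduce g.toWord).length,
        (cyclicReduce g.toWord)[p]?.map Prod.fst = some i ∧
        u <+: (cyclicReduce g.toWord ++ cyclicReduce g.toWord).drop (p + 1) ∧
        ((cyclicReduce g.toWord ++ cyclicReduce g.toWord).drop (p + 1 + u.length)).head?.map
          Prod.fst = some i) ∨
     (Avoids i (cyclicReduce g.toWord) ∧ ∃ p ≤ (cyclicReduce g.toWord).length,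
        u = (cyclicReduce g.toWord).drop p ++ (cyclicReduce g.toWord).take p))

/-- `k(Y)`: the maximal conjugate reduced `i`-length of an `i`-chunk of `α_Y y`, `y ∈ Y`. -/
noncomputable def kLen {n : ℕ} (i : Fin n) (Y : List (Wrd n)) : ℕ :=
  sSup {c | ∃ y ∈ Y, ∃ u, IsIChunk i (alphaFG i Y (FreeGroup.mk y)) u ∧ c = crLen i u}

/-- The full `i`-length `|Y|_i = k(Y) + |w_R(Y) w_L(Y)|_i^cr` of a set of reduced words. -/
noncomputable def fullLen {n : ℕ} (i : Fin n) (Y : List (Wrd n)) : ℕ :=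
  kLen i Y + crLen i (wR i Y ++ wL i Y)

/-- `x` is an (ordered) basis of the free group: it freely generates, i.e. the induced
    endomorphism of the free group is bijective. -/
def IsBasis {n : ℕ} (x : Fin n → FreeGroup (Fin n)) : Prop :=
  Function.Bijective (FreeGroup.lift x)

/-- A basis of `F_n` given by reduced words over the standard basis. -/
def IsWordBasis {n : ℕ} (x : Fin n → Wrd n) : Prop :=
  (∀ j, Reduced (x j)) ∧ IsBasis fun j => FreeGroup.mk (x j)

/-- `(A, B)` is a free factorization of `G` into two nontrivial free factors. -/
def IsFacPair {G : Type*} [Group G] (A B : Subgroup G) : Prop :=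
  A ≠ ⊥ ∧ B ≠ ⊥ ∧ Function.Bijective (Monoid.Coprod.lift A.subtype B.subtype)

/-- `(P, Q, R)` is a free factorization of `G` into three nontrivial free factors. -/
def IsFac3 {G : Type*} [Group G] (P Q R : Subgroup G) : Prop :=
  P ≠ ⊥ ∧ Q ≠ ⊥ ∧ R ≠ ⊥ ∧
    Function.Bijective (Monoid.CoprodI.lift fun j : Fin 3 => (![P, Q, R] j).subtype)

/-- The conjugate of a subgroup. -/
def conjSub {G : Type*} [Group G] (g : G) (H : Subgroup G) : Subgroup G :=
  H.map (MulAut.conj g).toMonoidHom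

/-- Two (ordered) pairs of subgroups determine the same vertex: they agree up to
    conjugation and swapping the factors. -/
def FacRel {G : Type*} [Group G] (p q : Subgroup G × Subgroup G) : Prop :=
  ∃ g : G, (q.1 = conjSub g p.1 ∧ q.2 = conjSub g p.2) ∨
           (q.1 = conjSub g p.2 ∧ q.2 = conjSub g p.1)

/-- Vertices of the edge splitting graph: pairs of subgroups up to conjugation and swap. -/
abbrev ESV (n : ℕ) := Quot (@FacRel (FreeGroup (Fin n)) _)

/-- The vertex of the edge splitting graph represented by the pair `(A, B)`. -/
def esv {n : ℕ} (A B : Subgroup (FreeGroup (Fin n))) : ESV n := Quot.mk _ (A, B)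

/-- The factorization `p` is refined by the factorization `q` via a common refinement
    `P * Q * R` into three nontrivial free factors: `p = (P*Q, R)` and `q = (P, Q*R)`. -/
def Refines {G : Type*} [Group G] (p q : Subgroup G × Subgroup G) : Prop :=
  ∃ P Q R : Subgroup G, IsFac3 P Q R ∧ p.1 = P ⊔ Q ∧ p.2 = R ∧ q.1 = P ∧ q.2 = Q ⊔ R

/-- The edge splitting graph `ES(n)`: two distinct vertices are adjacent if they admit
    representatives with a common refinement into three nontrivial free factors. -/
def ESGraph (n : ℕ) : SimpleGraph (ESV n) where
  Adj X Y := X ≠ Y ∧ ∃ p q, Quot.mk _ p = X ∧ Quot.mk _ q = Y ∧ (Refines p q ∨ Refines q p)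
  symm := ⟨by
    rintro X Y ⟨hne, p, q, hp, hq, h⟩
    exact ⟨hne.symm, q, p, hq, hp, h.symm⟩⟩
  loopless := ⟨fun X h => h.1 rfl⟩

/-- Nested families of canceling pairs:  `Fam w gs f` holds iff `w` carries a nested family
    `F` of `f` canceling pairs whose family of (possibly empty) maximal subwords disjoint
    from the pairs is `gs`. -/
inductive Fam {n : ℕ} : Wrd n → List (Wrd n) → ℕ → Prop
  | gap (g : Wrd n) : Fam g [g] 0
  | cons (g u w rest : Wrd n) (gs₁ gs₂ : List (Wrd n)) (f₁ f₂ : ℕ) :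
      u ≠ [] → Fam w gs₁ f₁ → Fam rest gs₂ f₂ →
      Fam (g ++ u ++ w ++ winv u ++ rest) (g :: (gs₁ ++ gs₂)) (f₁ + f₂ + 1)


-- ### auxiliary lemmas

lemma pairs_sublist_cons {n : ℕ} (x : Ltr n) (l : Wrd n) :
    List.Sublist (l.zip l.tail) ((x :: l).zip (x :: l).tail) := by
  cases l with
  | nil => simp
  | cons y l' =>
    simpa using List.Sublist.cons ((y, l'.headI)) (List.Sublist.refl _)

lemma pairs_sublist_append_right {n : ℕ} (u t : Wrd n) :
    List.Sublist (u.zip u.tail) ((u ++ t).zip (u ++ t).tail) := by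
  induction u with
  | nil => simp
  | cons x u' ih =>
    cases u' with
    | nil => simp
    | cons y u'' =>
      simp only [List.cons_append, List.tail_cons, List.zip_cons_cons]
      exact ih.cons₂ _

lemma pairs_sublist_infix {n : ℕ} {u w : Wrd n} (h : u <:+: w) :
    List.Sublist (u.zip u.tail) (w.zip w.tail) := by
  obtain ⟨s, t, rfl⟩ := h
  induction s with
  | nil => simpa using pairs_sublist_append_right u t
  | cons x s' ih => exact ih.trans (pairs_sublist_cons x _)

lemma wgraph_mono {n : ℕ} (i : Fin n) {u w : Wrd n} (h : u <:+: w) :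
    WGraph i u ≤ WGraph i w := by
  rintro x y ⟨hne, p, hp, hor⟩
  exact ⟨hne, p, (pairs_sublist_infix h).mem hp, hor⟩

def restrSub {V : Type*} {G G' : SimpleGraph V} (hle : G ≤ G') (H : G'.Subgraph) :
    G.Subgraph where
  verts := H.verts
  Adj x y := H.Adj x y ∧ G.Adj x y
  adj_sub hxy := hxy.2
  edge_vert hxy := H.edge_vert hxy.1
  symm := ⟨fun x y hxy => ⟨hxy.1.symm, hxy.2.symm⟩⟩

lemma hasCut_anti {V : Type*} {G G' : SimpleGraph V} (h : G ≤ G')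
    (hc : HasCutVertex G') : HasCutVertex G := by
  obtain ⟨v, H₁, H₂, hsup, hint, h1, h2⟩ := hc
  have hverts : H₁.verts ∪ H₂.verts = Set.univ := by
    have := congrArg SimpleGraph.Subgraph.verts hsup
    simpa using this
  have hadj : ∀ x y, G'.Adj x y → H₁.Adj x y ∨ H₂.Adj x y := by
    intro x y hxy
    have := congrFun (congrFun (congrArg SimpleGraph.Subgraph.Adj hsup) x) y
    rw [eq_iff_iff] at this
    simpa using this.mpr hxy
  refine ⟨v, restrSub h H₁, restrSub h H₂, ?_, hint, h1, h2⟩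
  refine SimpleGraph.Subgraph.ext ?_ ?_
  · simpa [restrSub] using hverts
  · funext x y
    simp only [restrSub, SimpleGraph.Subgraph.sup_adj, SimpleGraph.Subgraph.top_adj,
      eq_iff_iff]
    constructor
    · rintro (⟨_, hg⟩ | ⟨_, hg⟩) <;> exact hg
    · intro hg
      rcases hadj x y (h hg) with h' | h'
      · exact Or.inl ⟨h', hg⟩
      · exact Or.inr ⟨h', hg⟩

lemma good_infix {n : ℕ} (i : Fin n) {u w : Wrd n} (h : u <:+: w)
    (hu : u ≠ [] ∧ ¬ HasCutVertex (WGraph i u)) :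
    w ≠ [] ∧ ¬ HasCutVertex (WGraph i w) := by
  constructor
  · rintro rfl
    exact hu.1 (List.eq_nil_of_infix_nil h)
  · exact fun hc => hu.2 (hasCut_anti (wgraph_mono i h) hc)

def app1 {n : ℕ} (a : Wrd n) : List (Wrd n) → List (Wrd n)
  | [] => []
  | [m] => [m ++ a]
  | m :: m' :: ms => m :: app1 a (m' :: ms)

lemma app1_length {n : ℕ} (a : Wrd n) (M : List (Wrd n)) :
    (app1 a M).length = M.length := by
  induction M with
  | nil => rfl
  | cons m ms ih =>
    cases ms with
    | nil => rfl
    | cons m' ms' => simpa [app1] using ih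

lemma app1_flatten {n : ℕ} (a : Wrd n) (M : List (Wrd n)) (hM : M ≠ []) :
    (app1 a M).flatten = M.flatten ++ a := by
  induction M with
  | nil => exact absurd rfl hM
  | cons m ms ih =>
    cases ms with
    | nil => simp [app1]
    | cons m' ms' => simp [app1, ih (by simp)]

lemma app1_mem {n : ℕ} (a : Wrd n) (M : List (Wrd n)) :
    ∀ r ∈ app1 a M, ∃ m ∈ M, m <:+: r := by
  induction M with
  | nil => simp [app1]
  | cons m ms ih =>
    cases ms with
    | nil =>
      intro r hr
      simp only [app1, List.mem_singleton] at hr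
      exact ⟨m, by simp, hr ▸ ⟨[], a, by simp⟩⟩
    | cons m' ms' =>
      intro r hr
      rcases List.mem_cons.mp hr with rfl | hr
      · exact ⟨r, by simp, List.infix_refl r⟩
      · obtain ⟨m₀, hm₀, hinf⟩ := ih r hr
        exact ⟨m₀, List.mem_cons_of_mem _ hm₀, hinf⟩

def prep {n : ℕ} (b : Wrd n) : List (Wrd n) → List (Wrd n)
  | [] => []
  | m :: ms => (b ++ m) :: ms

lemma prep_length {n : ℕ} (b : Wrd n) (M : List (Wrd n)) :
    (prep b M).length = M.length := by cases M <;> rfl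

lemma prep_flatten {n : ℕ} (b : Wrd n) (M : List (Wrd n)) (hM : M ≠ []) :
    (prep b M).flatten = b ++ M.flatten := by
  cases M with
  | nil => exact absurd rfl hM
  | cons m ms => simp [prep]

lemma prep_mem {n : ℕ} (b : Wrd n) (M : List (Wrd n)) :
    ∀ r ∈ prep b M, ∃ m ∈ M, m <:+: r := by
  cases M with
  | nil => simp [prep]
  | cons m ms =>
    intro r hr
    rcases List.mem_cons.mp hr with rfl | hr
    · exact ⟨m, by simp, ⟨b, [], by simp⟩⟩
    · exact ⟨r, List.mem_cons_of_mem _ hr, List.infix_refl r⟩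

lemma len_le_flatten {n : ℕ} (ps : List (Wrd n)) (h : ∀ r ∈ ps, r ≠ []) :
    ps.length ≤ ps.flatten.length := by
  induction ps with
  | nil => simp
  | cons m ms ih =>
    have hm : m ≠ [] := h m (by simp)
    have : 1 ≤ m.length := List.length_pos_iff.mpr hm
    simp only [List.flatten_cons, List.length_append, List.length_cons]
    have := ih (fun r hr => h r (List.mem_cons_of_mem _ hr))
    omega

lemma split_flatten {n : ℕ} (ps : List (Wrd n)) (hps : ps ≠ []) :
    ∀ p q : Wrd n, ps.flatten = p ++ q →
    ∃ L a b R, ps = L ++ (a ++ b) :: R ∧ p = L.flatten ++ a ∧ q = b ++ R.flatten := by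
  induction ps with
  | nil => exact absurd rfl hps
  | cons z rest ih =>
    intro p q h
    simp only [List.flatten_cons] at h
    rcases List.append_eq_append_iff.mp h with ⟨a', ha1, ha2⟩ | ⟨c', hc1, hc2⟩
    · -- p = z ++ a', rest.flatten = a' ++ q
      rcases eq_or_ne rest [] with hrest | hrest
      · subst hrest
        simp only [List.flatten_nil] at ha2
        obtain ⟨ha', hq⟩ := List.append_eq_nil_iff.mp ha2.symm
        subst ha'
        refine ⟨[], z, [], [], by simp, by simp [ha1], by simp [hq]⟩
      · obtain ⟨L, a, b, R, h1, h2, h3⟩ := ih hrest a' q ha2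
        exact ⟨z :: L, a, b, R, by simp [h1], by simp [ha1, h2], h3⟩
    · -- z = p ++ c', q = c' ++ rest.flatten
      exact ⟨[], p, c', rest, by simp [hc1], by simp, hc2⟩

lemma simpleLen_conj_le {n : ℕ} (i : Fin n) (p q : Wrd n) :
    simpleLen i (p ++ q) ≤ simpleLen i (q ++ p) + 1 := by
  classical
  have bdd : ∀ w : Wrd n, BddAbove {t | ∃ ps : List (Wrd n), ps.length = t ∧
      ps.flatten = w ∧ ∀ r ∈ ps, r ≠ [] ∧ ¬ HasCutVertex (WGraph i r)} := by
    intro w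
    refine ⟨w.length, ?_⟩
    rintro t ⟨ps, rfl, rfl, h⟩
    exact len_le_flatten ps fun r hr => (h r hr).1
  set S : Set ℕ := {t | ∃ ps : List (Wrd n), ps.length = t ∧ ps.flatten = p ++ q ∧
      ∀ r ∈ ps, r ≠ [] ∧ ¬ HasCutVertex (WGraph i r)} with hSdef
  rcases Set.eq_empty_or_nonempty S with hS | hS
  · show sSup S ≤ _
    rw [hS, csSup_empty]
    exact Nat.zero_le _
  have hmem : sSup S ∈ S := Nat.sSup_mem hS (bdd _)
  obtain ⟨ps, hlen, hflat, hgood⟩ := hmem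
  rcases le_or_gt (sSup S) 1 with h1 | h1
  · calc simpleLen i (p ++ q) = sSup S := rfl
      _ ≤ 1 := h1
      _ ≤ _ := by omega
  -- sSup S ≥ 2
  obtain ⟨L, a, b, R, hps, hp, hq⟩ :=
    split_flatten ps (by rintro rfl; simp [show sSup S = 0 from hlen.symm] at h1) p q hflat
  have hMlen : (R ++ L).length = sSup S - 1 := by
    have : ps.length = L.length + R.length + 1 := by
      rw [hps]; simp only [List.length_append, List.length_cons]; omega
    simp only [List.length_append]
    omega
  have hMne : R ++ L ≠ [] := by
    intro hM
    have := hMlen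
    rw [hM] at this
    simp at this
    omega
  set ps' : List (Wrd n) := app1 a (prep b (R ++ L)) with hps'
  have hps'len : ps'.length = sSup S - 1 := by
    rw [hps', app1_length, prep_length, hMlen]
  have hprepne : prep b (R ++ L) ≠ [] := by
    cases hM : R ++ L with
    | nil => exact absurd hM hMne
    | cons m ms => simp [prep, hM]
  have hps'flat : ps'.flatten = q ++ p := by
    rw [hps', app1_flatten _ _ hprepne, prep_flatten _ _ hMne]
    rw [hp, hq]
    simp
  have hps'good : ∀ r ∈ ps', r ≠ [] ∧ ¬ HasCutVertex (WGraph i r) := by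
    intro r hr
    obtain ⟨m₁, hm₁, hinf₁⟩ := app1_mem a _ r hr
    obtain ⟨m, hm, hinf⟩ := prep_mem b _ m₁ hm₁
    have hmps : m ∈ ps := by
      rw [hps]
      rcases List.mem_append.mp hm with h' | h'
      · exact List.mem_append.mpr (Or.inr (List.mem_cons_of_mem _ h'))
      · exact List.mem_append.mpr (Or.inl h')
    exact good_infix i (hinf.trans hinf₁) (hgood m hmps)
  have : sSup S - 1 ∈ {t | ∃ ps : List (Wrd n), ps.length = t ∧ ps.flatten = q ++ p ∧
      ∀ r ∈ ps, r ≠ [] ∧ ¬ HasCutVertex (WGraph i r)} :=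
    ⟨ps', hps'len, hps'flat, hps'good⟩
  have hle : sSup S - 1 ≤ simpleLen i (q ++ p) := le_csSup (bdd _) this
  show sSup S ≤ simpleLen i (q ++ p) + 1
  omega

/-- simple `i`-length changes by at most 1 under cyclic conjugation. -/
theorem statement3 (n : ℕ) (hn : 2 < n) (i : Fin n) (p q : Wrd n)
    (hcr : CyclicallyReduced (p ++ q)) (hav : Avoids i (p ++ q)) :
    (simpleLen i (p ++ q) : ℤ) - 1 ≤ simpleLen i (q ++ p) ∧
      (simpleLen i (q ++ p) : ℤ) ≤ simpleLen i (p ++ q) + 1 := by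
  have h1 := simpleLen_conj_le i p q
  have h2 := simpleLen_conj_le i q p
  constructor <;> omega

end ESPaper
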